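/- Let p > 2 and let E ⊆ ℤ be a Λ(p) set. Then there is a constant C such that for all integers a and d with d ≠ 0 and every positive integer N, card(E ∩ {a + d, a + 2d, …, a + Nd}) ≤ C · N^{2/p}. -/

import Mathlib

open MeasureTheory

/-- `E ⊆ ℤ` is a `Λ(p)` set: there is a constant `C` such that every trigonometric polynomial
on the circle `ℝ/ℤ` with frequencies in `E` satisfies `‖f‖_p ≤ C * ‖f‖_2`. -/
def IsLambdaSet (p : ℝ) (E : Set ℤ) : Prop :=
  ∃ C : ℝ, 0 < C ∧ ∀ c : ℤ →₀ ℂ, ↑c.support ⊆ E →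
    eLpNorm (fun x : AddCircle (1 : ℝ) => ∑ n ∈ c.support, c n • fourier n x)
        (ENNReal.ofReal p) volume ≤
      ENNReal.ofReal C *
        eLpNorm (fun x : AddCircle (1 : ℝ) => ∑ n ∈ c.support, c n • fourier n x) 2 volume



lemma coeFn_sum_fourierLp (F : Finset ℤ) :
    ⇑(∑ n ∈ F, fourierLp (T := 1) 2 n) =ᵐ[AddCircle.haarAddCircle]
      fun x : AddCircle (1 : ℝ) => ∑ n ∈ F, fourier n x := by
  classical
  induction F using Finset.induction_on with
  | empty =>
      simp only [Finset.sum_empty]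
      filter_upwards [Lp.coeFn_zero ℂ 2 (AddCircle.haarAddCircle (T := 1))] with x hx
      simpa using hx
  | insert _ _ h ih =>
      rename_i a s
      rw [Finset.sum_insert h]
      filter_upwards [Lp.coeFn_add (fourierLp (T := 1) 2 a) (∑ n ∈ s, fourierLp (T := 1) 2 n),
        coeFn_fourierLp (T := 1) 2 a, ih] with x hx1 hx2 hx3
      simp only [hx1, Pi.add_apply, hx2, hx3, Finset.sum_insert h]

lemma parseval_sum_fourier (F : Finset ℤ) :
    eLpNorm (fun x : AddCircle (1 : ℝ) => ∑ n ∈ F, fourier n x) 2 volume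
      = ENNReal.ofReal (Real.sqrt F.card) := by
  set g : Lp ℂ 2 (AddCircle.haarAddCircle (T := 1)) := ∑ n ∈ F, fourierLp 2 n with hg
  have hae := coeFn_sum_fourierLp F
  have hvol : (volume : Measure (AddCircle (1:ℝ))) = AddCircle.haarAddCircle := by
    rw [AddCircle.volume_eq_smul_haarAddCircle]
    simp
  have hinner : (inner ℂ g g : ℂ) = (F.card : ℂ) := by
    have : g = ∑ n ∈ F, (fun _ : ℤ => (1:ℂ)) n • fourierLp 2 n := by simp [hg]
    rw [this, orthonormal_fourier.inner_sum]
    simp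
  have hnorm : ‖g‖ = Real.sqrt F.card := by
    rw [norm_eq_sqrt_re_inner (𝕜 := ℂ), hinner]
    norm_num
  rw [hvol, ← eLpNorm_congr_ae hae, ← hnorm,
    ← ENNReal.ofReal_toReal (Lp.eLpNorm_ne_top g), ← Lp.norm_def]


lemma re_fourier_one_of_norm_le {y : AddCircle (1:ℝ)} (hy : ‖y‖ ≤ 1/8) :
    (1:ℝ)/2 ≤ ((fourier 1 y : ℂ)).re := by
  induction y using QuotientAddGroup.induction_on with
  | H r =>
    have hnorm : ‖((r : ℝ) : AddCircle (1:ℝ))‖ = |r - round r| := by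
      rw [AddCircle.norm_eq]
      norm_num
    set q : ℝ := r - round r with hq
    have hcoe : ((r : ℝ) : AddCircle (1:ℝ)) = ((q : ℝ) : AddCircle (1:ℝ)) := by
      have h0 : (((round r : ℝ)) : AddCircle (1:ℝ)) = 0 := by
        rw [AddCircle.coe_eq_zero_iff]
        exact ⟨round r, by simp⟩
      have : ((r:ℝ) : AddCircle (1:ℝ)) = ((q:ℝ) : AddCircle (1:ℝ)) + ((round r : ℝ) : AddCircle (1:ℝ)) := by
        rw [← QuotientAddGroup.mk_add]
        norm_num [hq]
      rw [this, h0, add_zero]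
    have hqle : |q| ≤ 1/8 := by
      rw [hnorm] at hy; exact hy
    clear_value q
    rw [hcoe, fourier_coe_apply]
    have hexp : Complex.exp (2 * (Real.pi:ℂ) * Complex.I * (1:ℤ) * q / (1:ℝ))
        = Complex.exp (((2 * Real.pi * q : ℝ) : ℂ) * Complex.I) := by
      norm_num; ring_nf
    rw [hexp, Complex.exp_ofReal_mul_I_re]
    have hpi := Real.pi_le_four
    have hpi0 := Real.pi_pos
    have hcos := Real.one_sub_sq_div_two_le_cos (x := 2 * Real.pi * q)
    have habs : (2 * Real.pi * q)^2 ≤ 1 := by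
      have : |2 * Real.pi * q| ≤ 1 := by
        rw [abs_mul]
        calc |2 * Real.pi| * |q| ≤ 8 * (1/8) := by
              apply mul_le_mul _ hqle (abs_nonneg q) (by norm_num)
              rw [abs_of_pos (by positivity)]; linarith
          _ = 1 := by norm_num
      nlinarith [abs_nonneg (2 * Real.pi * q), sq_abs (2 * Real.pi * q)]
    nlinarith [hcos, habs]


lemma final_arith (p C s N : ℝ) (hp : 2 < p) (hC : 0 < C) (hs1 : 1 ≤ s) (hN : 1 ≤ N)
    (key : s/2 * (1/(4*N)) ^ (1/p) ≤ C * Real.sqrt s) : s ≤ 16 * C^2 * N ^ (2/p) := by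
  have hp0 : 0 < p := by linarith
  have hs0 : 0 < s := by linarith
  have hN0 : 0 < N := by linarith
  have hB : (0:ℝ) < (4*N) ^ (1/p) := Real.rpow_pos_of_pos (by positivity) _
  set B : ℝ := (4*N) ^ (1/p) with hBdef
  have hBinv : (1/(4*N)) ^ (1/p) = B⁻¹ := by
    rw [one_div ((4:ℝ)*N), Real.inv_rpow (by positivity)]
  have h2' : s/2 ≤ C * Real.sqrt s * B := by
    have := mul_le_mul_of_nonneg_right key hB.le
    rwa [hBinv, mul_assoc, inv_mul_cancel₀ hB.ne', mul_one] at this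
  have hsqrt : 0 < Real.sqrt s := Real.sqrt_pos.mpr hs0
  have hsq : Real.sqrt s ≤ 2 * C * B := by
    have hss : Real.sqrt s * Real.sqrt s = s := Real.mul_self_sqrt hs0.le
    have h3 : Real.sqrt s * Real.sqrt s ≤ (2 * C * B) * Real.sqrt s := by nlinarith
    exact le_of_mul_le_mul_right (by linarith [h3]) hsqrt
  have hfin : s ≤ 4 * C^2 * B^2 := by
    nlinarith [Real.sq_sqrt hs0.le, Real.sqrt_nonneg s]
  have hB2 : B^2 = (4*N) ^ (2/p) := by
    rw [hBdef, ← Real.rpow_natCast ((4*N) ^ (1/p)) 2, ← Real.rpow_mul (by positivity)]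
    congr 1
    push_cast
    ring
  have hB2' : (4*N) ^ (2/p) ≤ 4 * N ^ (2/p) := by
    rw [Real.mul_rpow (by norm_num) (by positivity)]
    have h4 : (4:ℝ) ^ (2/p) ≤ 4 := by
      calc (4:ℝ) ^ (2/p) ≤ 4 ^ (1:ℝ) :=
            Real.rpow_le_rpow_of_exponent_le (by norm_num) (by rw [div_le_one hp0]; linarith)
        _ = 4 := Real.rpow_one 4
    have hNp : (0:ℝ) ≤ N ^ (2/p) := by positivity
    nlinarith
  calc s ≤ 4 * C^2 * B^2 := hfin
    _ = 4 * C^2 * (4*N) ^ (2/p) := by rw [hB2]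
    _ ≤ 4 * C^2 * (4 * N ^ (2/p)) := by nlinarith [sq_nonneg C]
    _ = 16 * C^2 * N ^ (2/p) := by ring

lemma pointwise_bound (a d : ℤ) (N : ℕ) (hN : 0 < N) (K : Finset ℤ)
    (hK : K ⊆ Finset.Icc (1:ℤ) (N:ℤ)) (hd : d ≠ 0)
    (x : AddCircle (1:ℝ)) (hx : ‖(d • x : AddCircle (1:ℝ))‖ ≤ 1/(8*N)) :
    (K.card : ℝ)/2 ≤ ‖∑ k ∈ K, (fourier (a + k * d) x : ℂ)‖ := by
  have hterm : ∀ k ∈ K, (1:ℝ)/2 ≤ ((fourier (k * d) x : ℂ)).re := by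
    intro k hk
    have hk' := Finset.mem_Icc.mp (hK hk)
    have h1 : fourier (k * d) x = fourier 1 ((k * d) • x) := by
      rw [fourier_apply, fourier_apply, one_zsmul]
    have hnorm : ‖((k * d) • x : AddCircle (1:ℝ))‖ ≤ 1/8 := by
      have : (k * d) • x = k • (d • x) := mul_smul k d x
      rw [this]
      calc ‖k • (d • x)‖ ≤ ‖k‖ * ‖d • x‖ := norm_zsmul_le k (d • x)
        _ ≤ (N : ℝ) * (1/(8*N)) := by
            apply mul_le_mul _ hx (norm_nonneg _) (Nat.cast_nonneg N)
            rw [Int.norm_eq_abs]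
            calc |(k:ℝ)| = (k:ℝ) := abs_of_pos (by exact_mod_cast hk'.1)
              _ ≤ (N:ℝ) := by exact_mod_cast hk'.2
        _ = 1/8 := by field_simp
    rw [h1]
    exact re_fourier_one_of_norm_le hnorm
  have hsplit : ∑ k ∈ K, (fourier (a + k * d) x : ℂ)
      = fourier a x * ∑ k ∈ K, (fourier (k * d) x : ℂ) := by
    rw [Finset.mul_sum]
    exact Finset.sum_congr rfl fun k _ => by rw [← fourier_add]
  rw [hsplit, norm_mul]
  have h1 : ‖(fourier a x : ℂ)‖ = 1 := Circle.norm_coe _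
  rw [h1, one_mul]
  calc (K.card : ℝ)/2 = ∑ _k ∈ K, (1:ℝ)/2 := by
        rw [Finset.sum_const]; ring
    _ ≤ ∑ k ∈ K, ((fourier (k * d) x : ℂ)).re := Finset.sum_le_sum hterm
    _ = (∑ k ∈ K, (fourier (k * d) x : ℂ)).re := by
        rw [Complex.re_sum]
    _ ≤ ‖∑ k ∈ K, (fourier (k * d) x : ℂ)‖ := Complex.re_le_norm _

/-- **Rudin**: if `E ⊆ ℤ` is a `Λ(p)` set for some `p > 2`, then there is a constant `C`
such that `card (E ∩ {a + d, a + 2d, …, a + Nd}) ≤ C * N ^ (2/p)` for all integers `a`,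
`d ≠ 0` and all `N ≥ 1`. -/
theorem lambda_set_arithmetic_progression_bound (p : ℝ) (hp : 2 < p) (E : Set ℤ)
    (hE : IsLambdaSet p E) :
    ∃ C : ℝ, 0 < C ∧ ∀ a d : ℤ, d ≠ 0 → ∀ N : ℕ, 0 < N →
      ((E ∩ ((fun k : ℤ => a + k * d) '' Set.Icc 1 (N : ℤ))).ncard : ℝ) ≤
        C * (N : ℝ) ^ (2 / p) := by
  classical
  obtain ⟨C, hC, hbound⟩ := hE
  refine ⟨16 * C ^ 2, by positivity, ?_⟩
  intro a d hd N hN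
  have hNR : (1:ℝ) ≤ (N:ℝ) := by exact_mod_cast hN
  have hp0 : 0 < p := by linarith
  -- the finsets
  set K : Finset ℤ := (Finset.Icc (1:ℤ) (N:ℤ)).filter (fun k => a + k * d ∈ E) with hKdef
  have hinj : Set.InjOn (fun k : ℤ => a + k * d) ↑K := by
    intro x _ y _ h
    simp only at h
    exact mul_right_cancel₀ hd (by linarith)
  set F : Finset ℤ := K.image (fun k => a + k * d) with hFdef
  have hset : E ∩ ((fun k : ℤ => a + k * d) '' Set.Icc 1 (N : ℤ)) = ↑F := by
    ext n
    constructor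
    · rintro ⟨hnE, k, hk, rfl⟩
      exact Finset.mem_coe.mpr (Finset.mem_image.mpr
        ⟨k, Finset.mem_filter.mpr ⟨by rwa [Finset.mem_Icc, ← Set.mem_Icc], hnE⟩, rfl⟩)
    · intro hn
      obtain ⟨k, hk, rfl⟩ := Finset.mem_image.mp (Finset.mem_coe.mp hn)
      obtain ⟨hk1, hk2⟩ := Finset.mem_filter.mp hk
      exact ⟨hk2, k, by rwa [Set.mem_Icc, ← Finset.mem_Icc], rfl⟩
  have hFK : F.card = K.card := Finset.card_image_of_injOn hinj
  have hcard : ((E ∩ ((fun k : ℤ => a + k * d) '' Set.Icc 1 (N : ℤ))).ncard : ℝ) = (K.card : ℝ) := by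
    rw [hset, Set.ncard_coe_finset, hFK]
  rw [hcard]
  by_cases hz : K.card = 0
  · rw [hz]; norm_num; positivity
  have hs1 : (1:ℝ) ≤ (K.card : ℝ) := by exact_mod_cast Nat.one_le_iff_ne_zero.mpr hz
  set s : ℝ := (K.card : ℝ) with hsdef
  have hs0 : 0 < s := by linarith
  -- the Finsupp
  set c : ℤ →₀ ℂ := Finsupp.indicator F (fun _ _ => 1) with hcdef
  have hsupp : c.support = F := by
    ext n
    rw [Finsupp.mem_support_iff]
    constructor
    · intro h
      by_contra hn
      exact h (Finsupp.indicator_of_notMem hn _)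
    · intro h
      rw [Finsupp.indicator_of_mem h]
      exact one_ne_zero
  have hsubE : ↑c.support ⊆ E := by
    rw [hsupp]
    intro n hn
    obtain ⟨k, hk, rfl⟩ := Finset.mem_image.mp (Finset.mem_coe.mp hn)
    exact (Finset.mem_filter.mp hk).2
  set f : AddCircle (1:ℝ) → ℂ := fun x => ∑ k ∈ K, (fourier (a + k * d) x : ℂ) with hf
  have hfeq : (fun x : AddCircle (1 : ℝ) => ∑ n ∈ c.support, c n • fourier n x) = f := by
    funext x
    rw [hf, hsupp, hFdef, Finset.sum_image (fun u hu v hv h => hinj hu hv h)]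
    exact Finset.sum_congr rfl fun k hk => by
      rw [hcdef, Finsupp.indicator_of_mem (Finset.mem_image_of_mem _ hk), one_smul]
  have hfeq2 : f = fun x : AddCircle (1 : ℝ) => ∑ n ∈ F, fourier n x := by
    funext x
    rw [hf, hFdef, Finset.sum_image (fun u hu v hv h => hinj hu hv h)]
  -- upper bound
  have hup : eLpNorm f (ENNReal.ofReal p) volume ≤ ENNReal.ofReal (C * Real.sqrt s) := by
    have := hbound c hsubE
    rw [hfeq] at this
    refine this.trans ?_
    rw [hfeq2, parseval_sum_fourier F, ← ENNReal.ofReal_mul hC.le, hFK]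
  -- the set A
  set A : Set (AddCircle (1:ℝ)) := (fun x => d • x) ⁻¹' (Metric.closedBall 0 (1/(8*N))) with hA
  have hmp := MeasureTheory.Measure.measurePreserving_zsmul
    (volume : Measure (AddCircle (1:ℝ))) hd
  have hAmeas : MeasurableSet A := hmp.measurable measurableSet_closedBall
  have hAvol : volume A = ENNReal.ofReal (1/(4*N)) := by
    rw [hA, hmp.measure_preimage measurableSet_closedBall.nullMeasurableSet,
      AddCircle.volume_closedBall]
    congr 1
    rw [min_eq_right]
    · field_simp; ring
    · rw [mul_one_div, div_le_one (by positivity)]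
      linarith
  -- lower bound
  have hpt : ∀ x ∈ A, s/2 ≤ ‖f x‖ := by
    intro x hx
    refine pointwise_bound a d N hN K (Finset.filter_subset _ _) hd x ?_
    simpa [hA, Metric.mem_closedBall, dist_zero_right] using hx
  have hlow : ENNReal.ofReal (s/2 * (1/(4*N)) ^ (1/p)) ≤ eLpNorm f (ENNReal.ofReal p) volume := by
    have hP0 : (ENNReal.ofReal p) ≠ 0 := by
      simp [ENNReal.ofReal_eq_zero]; linarith
    have hPt : (ENNReal.ofReal p) ≠ ⊤ := ENNReal.ofReal_ne_top
    have hmono : eLpNorm (A.indicator fun _ => (s/2 : ℝ)) (ENNReal.ofReal p) volume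
        ≤ eLpNorm f (ENNReal.ofReal p) volume := by
      apply eLpNorm_mono
      intro x
      by_cases hx : x ∈ A
      · rw [Set.indicator_of_mem hx, Real.norm_eq_abs, abs_of_nonneg (by positivity)]
        exact hpt x hx
      · simp [Set.indicator_of_notMem hx]
    refine le_trans (le_of_eq ?_) hmono
    rw [eLpNorm_indicator_const hAmeas hP0 hPt, hAvol, ENNReal.toReal_ofReal hp0.le,
      ENNReal.ofReal_rpow_of_pos (by positivity), ENNReal.ofReal_mul (by positivity)]
    congr 1
    rw [Real.enorm_eq_ofReal (by positivity)]
  -- combine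
  have key : s/2 * (1/(4*N)) ^ (1/p) ≤ C * Real.sqrt s := by
    have h := hlow.trans hup
    rwa [ENNReal.ofReal_le_ofReal_iff (by positivity)] at h
  exact final_arith p C s N hp hC hs1 hNR key
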